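/- Let K be a field of characteristic 2 and let L/K be a finite Galois extension whose Galois group is G = {1, σ, τ, στ}, isomorphic to ℤ/2 × ℤ/2. For every pair (a, b) ∈ K × K with (a, b) ≠ (0, 0), the kernel of the K-linear endomorphism of L given by x ↦ a(σ(x) − x) + b(τ(x) − x) has dimension 2 as a K-vector space; moreover this kernel contains K and is contained in the kernel of the endomorphism x ↦ στ(x) − σ(x) − τ(x) + x. -/

import Mathlib

/-- For a finite Galois extension `L/K` of characteristic-two fields with
Galois group the Klein four group `{1, σ, τ, στ}`, and every `(a, b) ≠ (0, 0)` in `K × K`,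
the kernel of `x ↦ a(σ(x) − x) + b(τ(x) − x)` has `K`-dimension 2, contains `K`, and is
contained in the kernel of `x ↦ στ(x) − σ(x) − τ(x) + x`. -/
theorem klein_four_ab_operator_kernel
    (K L : Type*) [Field K] [Field L] [Algebra K L]
    [FiniteDimensional K L] [IsGalois K L] (hchar : CharP K 2)
    (σ τ : L ≃ₐ[K] L)
    (hσ2 : σ * σ = 1) (hτ2 : τ * τ = 1) (hcomm : σ * τ = τ * σ)
    (hσ1 : σ ≠ 1) (hτ1 : τ ≠ 1) (hστ : σ ≠ τ)
    (hall : ∀ g : L ≃ₐ[K] L, g = 1 ∨ g = σ ∨ g = τ ∨ g = σ * τ)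
    (a b : K) (hab : (a, b) ≠ (0, 0)) :
    Module.finrank K
        (LinearMap.ker
          (a • (σ.toLinearMap - (LinearMap.id : L →ₗ[K] L))
            + b • (τ.toLinearMap - (LinearMap.id : L →ₗ[K] L)))) = 2 ∧
    LinearMap.range (Algebra.linearMap K L)
      ≤ LinearMap.ker
          (a • (σ.toLinearMap - (LinearMap.id : L →ₗ[K] L))
            + b • (τ.toLinearMap - (LinearMap.id : L →ₗ[K] L))) ∧
    LinearMap.ker
        (a • (σ.toLinearMap - (LinearMap.id : L →ₗ[K] L))
          + b • (τ.toLinearMap - (LinearMap.id : L →ₗ[K] L)))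
      ≤ LinearMap.ker
          ((σ.toLinearMap ∘ₗ τ.toLinearMap) - σ.toLinearMap - τ.toLinearMap
            + (LinearMap.id : L →ₗ[K] L)) := by
  classical
  haveI := hchar
  haveI hchL : CharP L 2 := charP_of_injective_algebraMap (algebraMap K L).injective 2
  have h2K : (2 : K) = 0 := CharTwo.two_eq_zero
  have h2L : (2 : L) = 0 := CharTwo.two_eq_zero
  set S : L →ₗ[K] L := σ.toLinearMap - (LinearMap.id : L →ₗ[K] L) with hSdef
  set T : L →ₗ[K] L := τ.toLinearMap - (LinearMap.id : L →ₗ[K] L) with hTdef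
  set D : L →ₗ[K] L := a • S + b • T with hD
  set Eℓ : L →ₗ[K] L :=
    (σ.toLinearMap ∘ₗ τ.toLinearMap) - σ.toLinearMap - τ.toLinearMap
      + (LinearMap.id : L →ₗ[K] L) with hEdef
  have hab' : a ≠ 0 ∨ b ≠ 0 := by
    by_contra h
    push_neg at h
    exact hab (by simp [h.1, h.2])
  -- pointwise group relations
  have hσ2' : ∀ x : L, σ (σ x) = x := fun x => by
    have := DFunLike.congr_fun hσ2 x
    simpa using this
  have hτ2' : ∀ x : L, τ (τ x) = x := fun x => by
    have := DFunLike.congr_fun hτ2 x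
    simpa using this
  have hcomm' : ∀ x : L, σ (τ x) = τ (σ x) := fun x => by
    have := DFunLike.congr_fun hcomm x
    simpa using this
  -- distinctness
  have hστ1 : σ * τ ≠ 1 := by
    intro h
    apply hστ
    have h' : σ * (τ * τ) = τ := by rw [← mul_assoc, h, one_mul]
    rwa [hτ2, mul_one] at h'
  have hσ_στ : σ ≠ σ * τ := by
    intro h
    apply hτ1
    exact (mul_left_cancel (a := σ) (by rw [mul_one]; exact h : σ * 1 = σ * τ)).symm
  have hτ_στ : τ ≠ σ * τ := by
    intro h
    apply hσ1
    exact (mul_right_cancel (b := τ) (by rw [one_mul]; exact h : 1 * τ = σ * τ)).symm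
  have c1 : (1 : L ≃ₐ[K] L) ∉ ({σ, τ, σ * τ} : Finset (L ≃ₐ[K] L)) := by
    simp only [Finset.mem_insert, Finset.mem_singleton]
    push_neg
    exact ⟨Ne.symm hσ1, Ne.symm hτ1, Ne.symm hστ1⟩
  have c2 : σ ∉ ({τ, σ * τ} : Finset (L ≃ₐ[K] L)) := by
    simp only [Finset.mem_insert, Finset.mem_singleton]
    push_neg
    exact ⟨hστ, hσ_στ⟩
  have c3 : τ ∉ ({σ * τ} : Finset (L ≃ₐ[K] L)) := by
    simpa using hτ_στ
  have huniv : (Finset.univ : Finset (L ≃ₐ[K] L)) = {1, σ, τ, σ * τ} := by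
    ext g
    simp only [Finset.mem_univ, true_iff, Finset.mem_insert, Finset.mem_singleton]
    exact hall g
  have hcard : Fintype.card (L ≃ₐ[K] L) = 4 := by
    rw [Fintype.card, huniv, Finset.card_insert_of_notMem c1,
      Finset.card_insert_of_notMem c2, Finset.card_insert_of_notMem c3,
      Finset.card_singleton]
  have hrank : Module.finrank K L = 4 := by
    rw [← IsGalois.card_aut_eq_finrank, Nat.card_eq_fintype_card, hcard]
  -- a trace-one element
  obtain ⟨θ₀, hθ₀⟩ : ∃ x : L, Algebra.trace K L x ≠ 0 := by
    by_contra h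
    push_neg at h
    exact Algebra.trace_ne_zero K L (LinearMap.ext fun x => by simp [h x])
  set θ : L := (Algebra.trace K L θ₀)⁻¹ • θ₀ with hθdef
  have hθtr : algebraMap K L (Algebra.trace K L θ) = 1 := by
    rw [hθdef, map_smul, smul_eq_mul, inv_mul_cancel₀ hθ₀, map_one]
  have hsum : θ + σ θ + τ θ + σ (τ θ) = 1 := by
    have h := trace_eq_sum_automorphisms (K := K) θ
    rw [hθtr, huniv, Finset.sum_insert c1, Finset.sum_insert c2, Finset.sum_insert c3,
      Finset.sum_singleton] at h
    have h' : θ + (σ θ + (τ θ + σ (τ θ))) = 1 := by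
      simpa [AlgEquiv.mul_apply] using h.symm
    linear_combination h'
  have hE : σ (τ θ) - σ θ - τ θ + θ = 1 := by
    linear_combination hsum - (σ θ + τ θ) * h2L
  set α : L := τ θ - θ with hα
  set β : L := σ θ - θ with hβ
  have hσα : σ α - α = 1 := by
    rw [hα, map_sub]
    linear_combination hE
  have hτα : τ α = α := by
    rw [hα, map_sub, hτ2' θ]
    linear_combination (θ - τ θ) * h2L
  have hτβ : τ β - β = 1 := by
    rw [hβ, map_sub, ← hcomm' θ]
    linear_combination hE
  have hσβ : σ β = β := by
    rw [hβ, map_sub, hσ2' θ]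
    linear_combination (θ - σ θ) * h2L
  have hσα' : σ α = α + 1 := by linear_combination hσα
  have hτβ' : τ β = β + 1 := by linear_combination hτβ
  -- applications of the operators
  have hSapp : ∀ x : L, S x = σ x - x := fun x => by
    simp [hSdef, LinearMap.sub_apply, LinearMap.id_apply, AlgEquiv.toLinearMap_apply]
  have hTapp : ∀ x : L, T x = τ x - x := fun x => by
    simp [hTdef, LinearMap.sub_apply, LinearMap.id_apply, AlgEquiv.toLinearMap_apply]
  have hDapp : ∀ x : L, D x = a • (σ x - x) + b • (τ x - x) := fun x => by
    rw [hD, LinearMap.add_apply, LinearMap.smul_apply, LinearMap.smul_apply,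
      hSapp, hTapp]
  have hEapp : ∀ x : L, Eℓ x = σ (τ x) - σ x - τ x + x := fun x => by
    simp [hEdef, LinearMap.add_apply, LinearMap.sub_apply, LinearMap.comp_apply,
      LinearMap.id_apply, AlgEquiv.toLinearMap_apply]
  have hS1 : S (1 : L) = 0 := by rw [hSapp, map_one, sub_self]
  have hSα : S α = 1 := by rw [hSapp]; exact hσα
  have hSβ : S β = 0 := by rw [hSapp, hσβ, sub_self]
  have hSθ : S θ = β := by rw [hSapp, ← hβ]
  have hT1 : T (1 : L) = 0 := by rw [hTapp, map_one, sub_self]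
  have hTα : T α = 0 := by rw [hTapp, hτα, sub_self]
  have hTβ : T β = 1 := by rw [hTapp]; exact hτβ
  have hTθ : T θ = α := by rw [hTapp, ← hα]
  have hDval : ∀ x : L, D x = a • S x + b • T x := fun x => by
    rw [hD, LinearMap.add_apply, LinearMap.smul_apply, LinearMap.smul_apply]
  have hD1 : D (1 : L) = 0 := by rw [hDval, hS1, hT1, smul_zero, smul_zero, add_zero]
  have hDα : D α = a • (1 : L) := by rw [hDval, hSα, hTα, smul_zero, add_zero]
  have hDβ : D β = b • (1 : L) := by rw [hDval, hSβ, hTβ, smul_zero, zero_add]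
  have hDθ : D θ = a • β + b • α := by rw [hDval, hSθ, hTθ]
  have hE1 : Eℓ (1 : L) = 0 := by
    rw [hEapp]; simp only [map_one]; ring
  have hEα : Eℓ α = 0 := by
    rw [hEapp, hτα, hσα']; ring
  have hEβ : Eℓ β = 0 := by
    rw [hEapp, hτβ', map_add, map_one, hσβ]; ring
  have hEθ : Eℓ θ = 1 := by
    rw [hEapp]; exact hE
  have hone : ∀ c : K, c • (1 : L) = 0 → c = 0 := fun c hc => by
    have h' : algebraMap K L c = 0 := by rwa [Algebra.algebraMap_eq_smul_one]
    exact (algebraMap K L).injective (by rw [h', map_zero])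
  -- linear independence of 1, α, β, θ
  have hli : LinearIndependent K ![(1 : L), α, β, θ] := by
    rw [Fintype.linearIndependent_iff]
    intro g hg
    rw [Fin.sum_univ_four] at hg
    simp only [Matrix.cons_val_zero, Matrix.cons_val_one, Matrix.head_cons,
      Matrix.cons_val_two, Matrix.tail_cons, Matrix.cons_val_three] at hg
    have h3 : g 3 = 0 := by
      have h := congrArg Eℓ hg
      simp only [map_add, map_smul, hE1, hEα, hEβ, hEθ, smul_zero, add_zero, zero_add,
        map_zero] at h
      exact hone _ h
    rw [h3, zero_smul, add_zero] at hg
    have h1 : g 1 = 0 := by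
      have h := congrArg S hg
      simp only [map_add, map_smul, hS1, hSα, hSβ, smul_zero, add_zero, zero_add,
        map_zero] at h
      exact hone _ h
    have h2 : g 2 = 0 := by
      have h := congrArg T hg
      simp only [map_add, map_smul, hT1, hTα, hTβ, smul_zero, add_zero, zero_add,
        map_zero] at h
      exact hone _ h
    rw [h1, h2, zero_smul, zero_smul, add_zero, add_zero] at hg
    have h0 : g 0 = 0 := hone _ hg
    intro i
    fin_cases i
    · exact h0
    · exact h1
    · exact h2
    · exact h3
  have hspan : Submodule.span K (Set.range ![(1 : L), α, β, θ]) = ⊤ :=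
    hli.span_eq_top_of_card_eq_finrank (by rw [Fintype.card_fin, hrank])
  have hrepr : ∀ x : L, ∃ c : Fin 4 → K,
      x = c 0 • (1 : L) + c 1 • α + c 2 • β + c 3 • θ := by
    intro x
    have hx : x ∈ Submodule.span K (Set.range ![(1 : L), α, β, θ]) := by
      rw [hspan]; exact Submodule.mem_top
    obtain ⟨c, hc⟩ := (Submodule.mem_span_range_iff_exists_fun K).mp hx
    refine ⟨c, ?_⟩
    rw [← hc, Fin.sum_univ_four]
    simp only [Matrix.cons_val_zero, Matrix.cons_val_one, Matrix.head_cons,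
      Matrix.cons_val_two, Matrix.tail_cons, Matrix.cons_val_three]
  -- kernel of D : decomposition lemma
  have hker : ∀ x : L, D x = 0 →
      ∃ c0 c1 c2 : K, x = c0 • (1 : L) + c1 • α + c2 • β ∧ c1 * a + c2 * b = 0 := by
    intro x hx0
    obtain ⟨c, hcx⟩ := hrepr x
    have hDx : (c 1 * a + c 2 * b) • (1 : L) + (c 3 * b) • α + (c 3 * a) • β
        + (0 : K) • θ = 0 := by
      rw [← hx0, hcx]
      simp only [map_add, map_smul, hD1, hDα, hDβ, hDθ, smul_zero]
      module
    have hz := Fintype.linearIndependent_iff.mp hli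
      ![c 1 * a + c 2 * b, c 3 * b, c 3 * a, 0] (by
        rw [Fin.sum_univ_four]
        simpa only [Matrix.cons_val_zero, Matrix.cons_val_one, Matrix.head_cons,
          Matrix.cons_val_two, Matrix.tail_cons, Matrix.cons_val_three] using hDx)
    have hz0 : c 1 * a + c 2 * b = 0 := by simpa using hz 0
    have hz1 : c 3 * b = 0 := by simpa using hz 1
    have hz2 : c 3 * a = 0 := by simpa using hz 2
    have h3 : c 3 = 0 := by
      rcases hab' with ha | hb
      · exact (mul_eq_zero.mp hz2).resolve_right ha
      · exact (mul_eq_zero.mp hz1).resolve_right hb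
    refine ⟨c 0, c 1, c 2, ?_, hz0⟩
    rw [hcx, h3, zero_smul, add_zero]
  refine ⟨?_, ?_, ?_⟩
  · -- finrank = 2
    have hw : LinearIndependent K ![(1 : L), b • α + a • β] := by
      rw [Fintype.linearIndependent_iff]
      intro g hg
      rw [Fin.sum_univ_two] at hg
      simp only [Matrix.cons_val_zero, Matrix.cons_val_one, Matrix.head_cons] at hg
      have hg' : (g 0) • (1 : L) + (g 1 * b) • α + (g 1 * a) • β + (0 : K) • θ = 0 := by
        rw [← hg]; module
      have hz := Fintype.linearIndependent_iff.mp hli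
        ![g 0, g 1 * b, g 1 * a, 0] (by
          rw [Fin.sum_univ_four]
          simpa only [Matrix.cons_val_zero, Matrix.cons_val_one, Matrix.head_cons,
            Matrix.cons_val_two, Matrix.tail_cons, Matrix.cons_val_three] using hg')
      have hz0 : g 0 = 0 := by simpa using hz 0
      have hz1 : g 1 * b = 0 := by simpa using hz 1
      have hz2 : g 1 * a = 0 := by simpa using hz 2
      have h1 : g 1 = 0 := by
        rcases hab' with ha | hb
        · exact (mul_eq_zero.mp hz2).resolve_right ha
        · exact (mul_eq_zero.mp hz1).resolve_right hb
      intro i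
      fin_cases i
      · exact hz0
      · exact h1
    have hkerD : LinearMap.ker D
        = Submodule.span K (Set.range ![(1 : L), b • α + a • β]) := by
      apply le_antisymm
      · intro x hx
        rw [LinearMap.mem_ker] at hx
        obtain ⟨c0, c1, c2, rfl, hcon⟩ := hker x hx
        have hmem1 : (1 : L) ∈ Submodule.span K (Set.range ![(1 : L), b • α + a • β]) :=
          Submodule.subset_span ⟨0, rfl⟩
        have hmem2 : b • α + a • β
            ∈ Submodule.span K (Set.range ![(1 : L), b • α + a • β]) :=
          Submodule.subset_span ⟨1, rfl⟩
        rcases eq_or_ne a 0 with ha0 | ha0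
        · have hb0 : b ≠ 0 := by
            rcases hab' with h | h
            · exact absurd ha0 h
            · exact h
          have hc2 : c2 = 0 := by
            have h' : c2 * b = 0 := by
              rw [ha0] at hcon
              linear_combination hcon
            exact (mul_eq_zero.mp h').resolve_right hb0
          have htb : (c1 * b⁻¹) * b = c1 := by field_simp
          have hta : (c1 * b⁻¹) * a = c2 := by rw [ha0, hc2, mul_zero]
          have hx2 : c0 • (1 : L) + c1 • α + c2 • β
              = c0 • (1 : L) + (c1 * b⁻¹) • (b • α + a • β) := by
            rw [smul_add, smul_smul, smul_smul, htb, hta, add_assoc]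
          rw [hx2]
          exact Submodule.add_mem _ (Submodule.smul_mem _ _ hmem1)
            (Submodule.smul_mem _ _ hmem2)
        · have htb : (c2 * a⁻¹) * b = c1 := by
            field_simp
            linear_combination hcon - c1 * a * h2K
          have hta : (c2 * a⁻¹) * a = c2 := by field_simp
          have hx2 : c0 • (1 : L) + c1 • α + c2 • β
              = c0 • (1 : L) + (c2 * a⁻¹) • (b • α + a • β) := by
            rw [smul_add, smul_smul, smul_smul, htb, hta, add_assoc]
          rw [hx2]
          exact Submodule.add_mem _ (Submodule.smul_mem _ _ hmem1)
            (Submodule.smul_mem _ _ hmem2)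
      · rw [Submodule.span_le]
        rintro x ⟨i, rfl⟩
        fin_cases i
        · show D (1 : L) = 0
          exact hD1
        · show D (b • α + a • β) = 0
          rw [map_add, map_smul, map_smul, hDα, hDβ, smul_smul, smul_smul]
          rw [← add_smul]
          have : b * a + a * b = 0 := by linear_combination a * b * h2K
          rw [this, zero_smul]
    rw [hkerD, finrank_span_eq_card hw, Fintype.card_fin]
  · -- range algebraMap ≤ ker D
    rintro x ⟨c, rfl⟩
    rw [LinearMap.mem_ker]
    simp only [Algebra.linearMap_apply]
    rw [hDapp]
    simp [AlgEquiv.commutes]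
  · -- ker D ≤ ker Eℓ
    intro x hx
    rw [LinearMap.mem_ker] at hx ⊢
    obtain ⟨c0, c1, c2, rfl, -⟩ := hker x hx
    simp only [map_add, map_smul, hE1, hEα, hEβ, smul_zero, add_zero]
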